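/- For all positive integers n and m, f(n+m) ≥ 2·f(n)·f(m), where f(k) denotes the maximum size of a Condorcet domain on a set of k alternatives. -/

import Mathlib

/-- The majority relation of a profile `P` of `k` voters: `a` beats `b` if more voters
rank `a` above `b` than rank `b` above `a`. -/
def Maj {α : Type*} {k : ℕ} (P : Fin k → α → α → Prop) (a b : α) : Prop :=
  Nat.card {i : Fin k // P i a b} > Nat.card {i : Fin k // P i b a}

/-- `D` is a Condorcet domain: a set of linear orders (strict total orders) on the
alternatives such that every profile with an odd number of voters drawn from `D`
has a transitive majority relation. -/
def IsCondorcetDomain {α : Type*} (D : Set (α → α → Prop)) : Prop :=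
  (∀ r ∈ D, IsStrictTotalOrder α r) ∧
  ∀ (k : ℕ), Odd k → ∀ P : Fin k → α → α → Prop,
    (∀ i, P i ∈ D) → Transitive (Maj P)

/-- `maxCD n` is the maximum size of a Condorcet domain on `n` alternatives. -/
noncomputable def maxCD (n : ℕ) : ℕ :=
  sSup {s : ℕ | ∃ D : Set (Fin n → Fin n → Prop), IsCondorcetDomain D ∧ s = Nat.card D}

/- ### Auxiliary counting lemmas -/

lemma cnt_congr {k : ℕ} {p q : Fin k → Prop} (h : ∀ i, p i ↔ q i) :
    Nat.card {i // p i} = Nat.card {i // q i} :=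
  Nat.card_congr (Equiv.subtypeEquivRight h)

lemma cnt_mono {k : ℕ} {p q : Fin k → Prop} (h : ∀ i, p i → q i) :
    Nat.card {i // p i} ≤ Nat.card {i // q i} :=
  Nat.card_le_card_of_injective (fun x => ⟨x.1, h x.1 x.2⟩)
    (fun a b hab => Subtype.ext (by simpa [Subtype.ext_iff] using hab))

lemma cnt_compl {k : ℕ} {p q : Fin k → Prop} (h : ∀ i, p i ↔ ¬ q i) :
    Nat.card {i // p i} + Nat.card {i // q i} = k := by
  classical
  have e : {i // p i} ⊕ {i // q i} ≃ Fin k :=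
    ((Equiv.subtypeEquivRight h).sumCongr (Equiv.refl _)).trans
      ((Equiv.sumComm _ _).trans (Equiv.sumCompl q))
  have h2 := Nat.card_congr e
  rw [Nat.card_sum] at h2
  simpa using h2

/- ### bottom and top of a strict total order -/

lemma STO_tri {α : Type*} {r : α → α → Prop} (hr : IsStrictTotalOrder α r) (a b : α) :
    r a b ∨ a = b ∨ r b a := by
  by_cases h1 : r a b
  · exact Or.inl h1
  by_cases h2 : r b a
  · exact Or.inr (Or.inr h2)
  exact Or.inr (Or.inl (hr.trichotomous a b h1 h2))

lemma exists_bot {N : ℕ} (r : Fin N → Fin N → Prop) (hr : IsStrictTotalOrder (Fin N) r)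
    (hN : 0 < N) : ∃ b0, ∀ x, x ≠ b0 → r x b0 := by
  haveI : IsTrans (Fin N) (flip r) := ⟨fun a b c h1 h2 => hr.trans _ _ _ h2 h1⟩
  haveI : IsIrrefl (Fin N) (flip r) := ⟨fun a => hr.irrefl a⟩
  obtain ⟨b0, -, hb⟩ := (Finite.wellFounded_of_trans_of_irrefl (flip r)).has_min
    Set.univ ⟨⟨0, hN⟩, trivial⟩
  refine ⟨b0, fun x hx => ?_⟩
  rcases STO_tri hr x b0 with h | h | h
  · exact h
  · exact absurd h hx
  · exact absurd h (hb x trivial)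

open Classical in
noncomputable def botOf {N : ℕ} (hN : 0 < N) (r : Fin N → Fin N → Prop) : Fin N :=
  if h : ∃ b0, ∀ x, x ≠ b0 → r x b0 then h.choose else ⟨0, hN⟩

lemma botOf_spec {N : ℕ} (hN : 0 < N) (r : Fin N → Fin N → Prop)
    (hr : IsStrictTotalOrder (Fin N) r) : ∀ x, x ≠ botOf hN r → r x (botOf hN r) := by
  classical
  have h := exists_bot r hr hN
  simp only [botOf]
  rw [dif_pos h]
  exact h.choose_spec

noncomputable def topOf {N : ℕ} (hN : 0 < N) (r : Fin N → Fin N → Prop) : Fin N :=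
  botOf hN (flip r)

lemma flip_STO {N : ℕ} {r : Fin N → Fin N → Prop} (hr : IsStrictTotalOrder (Fin N) r) :
    IsStrictTotalOrder (Fin N) (flip r) where
  trichotomous a b h1 h2 := hr.trichotomous a b h2 h1
  irrefl a := hr.irrefl a
  trans a b c h1 h2 := hr.trans _ _ _ h2 h1

lemma topOf_spec {N : ℕ} (hN : 0 < N) (r : Fin N → Fin N → Prop)
    (hr : IsStrictTotalOrder (Fin N) r) : ∀ x, x ≠ topOf hN r → r (topOf hN r) x :=
  botOf_spec hN (flip r) (flip_STO hr)

lemma STO_asymm {N : ℕ} {r : Fin N → Fin N → Prop} (hr : IsStrictTotalOrder (Fin N) r)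
    {a b : Fin N} (h : r a b) : ¬ r b a :=
  fun h2 => hr.irrefl a (hr.trans _ _ _ h h2)

lemma STO_compl {N : ℕ} {r : Fin N → Fin N → Prop} (hr : IsStrictTotalOrder (Fin N) r)
    {a b : Fin N} (hab : a ≠ b) : r a b ↔ ¬ r b a := by
  constructor
  · exact fun h => STO_asymm hr h
  · intro h
    rcases STO_tri hr a b with h' | h' | h'
    · exact h'
    · exact absurd h' hab
    · exact absurd h' h

/- ### the combined order -/

def comb (n m : ℕ) (ε : Bool) (u : Fin n → Fin n → Prop) (v : Fin m → Fin m → Prop)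
    (b0 : Fin n) (t : Fin m) (x y : Fin (n + m)) : Prop :=
  if hx : (x : ℕ) < n then
    if hy : (y : ℕ) < n then u ⟨x, hx⟩ ⟨y, hy⟩
    else ¬(ε = true ∧ (⟨(y : ℕ) - n, by have := y.isLt; omega⟩ : Fin m) = t ∧
           (⟨(x : ℕ), hx⟩ : Fin n) = b0)
  else
    if hy : (y : ℕ) < n then
      ε = true ∧ (⟨(x : ℕ) - n, by have := x.isLt; omega⟩ : Fin m) = t ∧
        (⟨(y : ℕ), hy⟩ : Fin n) = b0
    else v ⟨(x : ℕ) - n, by have := x.isLt; omega⟩ ⟨(y : ℕ) - n, by have := y.isLt; omega⟩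

lemma comb_AA {n m : ℕ} {ε u v b0 t} {x y : Fin (n + m)} (hx : (x : ℕ) < n)
    (hy : (y : ℕ) < n) :
    comb n m ε u v b0 t x y ↔ u ⟨x, hx⟩ ⟨y, hy⟩ := by
  simp [comb, hx, hy]

lemma comb_AB {n m : ℕ} {ε u v b0 t} {x y : Fin (n + m)} (hx : (x : ℕ) < n)
    (hy : ¬ (y : ℕ) < n) :
    comb n m ε u v b0 t x y ↔
      ¬(ε = true ∧ (⟨(y : ℕ) - n, by have := y.isLt; omega⟩ : Fin m) = t ∧
        (⟨(x : ℕ), hx⟩ : Fin n) = b0) := by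
  simp [comb, hx, hy]

lemma comb_BA {n m : ℕ} {ε u v b0 t} {x y : Fin (n + m)} (hx : ¬ (x : ℕ) < n)
    (hy : (y : ℕ) < n) :
    comb n m ε u v b0 t x y ↔
      (ε = true ∧ (⟨(x : ℕ) - n, by have := x.isLt; omega⟩ : Fin m) = t ∧
        (⟨(y : ℕ), hy⟩ : Fin n) = b0) := by
  simp [comb, hx, hy]

lemma comb_BB {n m : ℕ} {ε u v b0 t} {x y : Fin (n + m)} (hx : ¬ (x : ℕ) < n)
    (hy : ¬ (y : ℕ) < n) :
    comb n m ε u v b0 t x y ↔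
      v ⟨(x : ℕ) - n, by have := x.isLt; omega⟩ ⟨(y : ℕ) - n, by have := y.isLt; omega⟩ := by
  simp [comb, hx, hy]

lemma comb_STO {n m : ℕ} (hn : 0 < n) (hm : 0 < m) (ε : Bool)
    {u : Fin n → Fin n → Prop} {v : Fin m → Fin m → Prop}
    (hu : IsStrictTotalOrder (Fin n) u) (hv : IsStrictTotalOrder (Fin m) v) :
    IsStrictTotalOrder (Fin (n + m)) (comb n m ε u v (botOf hn u) (topOf hm v)) := by
  have hb0 := botOf_spec hn u hu
  have ht := topOf_spec hm v hv
  refine { trichotomous := ?_, irrefl := ?_, trans := ?_ }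
  · intro x y
    suffices H : comb n m ε u v (botOf hn u) (topOf hm v) x y ∨ x = y ∨
        comb n m ε u v (botOf hn u) (topOf hm v) y x from
      fun h1 h2 => H.elim (fun h => absurd h h1) (fun h => h.elim id (fun h => absurd h h2))
    by_cases hx : (x : ℕ) < n <;> by_cases hy : (y : ℕ) < n
    · rcases eq_or_ne x y with h | h
      · exact Or.inr (Or.inl h)
      rcases STO_tri hu ⟨x, hx⟩ ⟨y, hy⟩ with h' | h' | h'
      · exact Or.inl ((comb_AA hx hy).mpr h')
      · have hval : (x : ℕ) = (y : ℕ) := by simpa [Fin.mk.injEq] using h'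
        exact absurd (Fin.ext hval) h
      · exact Or.inr (Or.inr ((comb_AA hy hx).mpr h'))
    · by_cases hC : (ε = true ∧ (⟨(y : ℕ) - n, by have := y.isLt; omega⟩ : Fin m) = topOf hm v ∧
          (⟨(x : ℕ), hx⟩ : Fin n) = botOf hn u)
      · exact Or.inr (Or.inr ((comb_BA hy hx).mpr hC))
      · exact Or.inl ((comb_AB hx hy).mpr hC)
    · by_cases hC : (ε = true ∧ (⟨(x : ℕ) - n, by have := x.isLt; omega⟩ : Fin m) = topOf hm v ∧
          (⟨(y : ℕ), hy⟩ : Fin n) = botOf hn u)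
      · exact Or.inl ((comb_BA hx hy).mpr hC)
      · exact Or.inr (Or.inr ((comb_AB hy hx).mpr hC))
    · rcases eq_or_ne x y with h | h
      · exact Or.inr (Or.inl h)
      have hne : ((⟨(x : ℕ) - n, by have := x.isLt; omega⟩ : Fin m)) ≠
          ⟨(y : ℕ) - n, by have := y.isLt; omega⟩ := by
        intro he
        apply h
        have : (x : ℕ) - n = (y : ℕ) - n := by simpa [Fin.mk.injEq] using he
        exact Fin.ext (by omega)
      rcases STO_tri hv _ _ with h' | h' | h'
      · exact Or.inl ((comb_BB hx hy).mpr h')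
      · exact absurd h' hne
      · exact Or.inr (Or.inr ((comb_BB hy hx).mpr h'))
  · intro x hx
    by_cases h : (x : ℕ) < n
    · exact hu.irrefl _ ((comb_AA h h).mp hx)
    · exact hv.irrefl _ ((comb_BB h h).mp hx)
  · intro x y z hxy hyz
    by_cases hx : (x : ℕ) < n <;> by_cases hy : (y : ℕ) < n <;> by_cases hz : (z : ℕ) < n
    · -- AAA
      exact (comb_AA hx hz).mpr (hu.trans _ _ _ ((comb_AA hx hy).mp hxy)
        ((comb_AA hy hz).mp hyz))
    · -- AAB
      rw [comb_AA hx hy] at hxy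
      rw [comb_AB hx hz]
      rintro ⟨he, hT, hB⟩
      rw [hB] at hxy
      have hne : (⟨(y : ℕ), hy⟩ : Fin n) ≠ botOf hn u := fun h => hu.irrefl _ (h ▸ hxy)
      exact STO_asymm hu hxy (hb0 _ hne)
    · -- ABA
      rw [comb_AB hx hy] at hxy
      rw [comb_BA hy hz] at hyz
      obtain ⟨he, hT, hB⟩ := hyz
      rw [comb_AA hx hz, hB]
      have hne : (⟨(x : ℕ), hx⟩ : Fin n) ≠ botOf hn u := fun h => hxy ⟨he, hT, h⟩
      exact hb0 _ hne
    · -- ABB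
      rw [comb_AB hx hy] at hxy
      rw [comb_BB hy hz] at hyz
      rw [comb_AB hx hz]
      rintro ⟨he, hT, hB⟩
      have hne : (⟨(y : ℕ) - n, by have := y.isLt; omega⟩ : Fin m) ≠ topOf hm v :=
        fun h => hxy ⟨he, h, hB⟩
      rw [hT] at hyz
      exact STO_asymm hv hyz (ht _ hne)
    · -- BAA
      rw [comb_BA hx hy] at hxy
      rw [comb_AA hy hz] at hyz
      obtain ⟨he, hT, hB⟩ := hxy
      rw [hB] at hyz
      have hne : (⟨(z : ℕ), hz⟩ : Fin n) ≠ botOf hn u := fun h => hu.irrefl _ (h ▸ hyz)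
      exact absurd (hb0 _ hne) (STO_asymm hu hyz)
    · -- BAB
      rw [comb_BA hx hy] at hxy
      rw [comb_AB hy hz] at hyz
      obtain ⟨he, hT, hB⟩ := hxy
      rw [comb_BB hx hz, hT]
      have hzt : (⟨(z : ℕ) - n, by have := z.isLt; omega⟩ : Fin m) ≠ topOf hm v :=
        fun h => hyz ⟨he, h, hB⟩
      exact ht _ hzt
    · -- BBA
      rw [comb_BB hx hy] at hxy
      rw [comb_BA hy hz] at hyz
      obtain ⟨he, hT, hB⟩ := hyz
      rw [hT] at hxy
      have hne : (⟨(x : ℕ) - n, by have := x.isLt; omega⟩ : Fin m) ≠ topOf hm v :=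
        fun h => hv.irrefl _ (h ▸ hxy)
      exact absurd (ht _ hne) (STO_asymm hv hxy)
    · -- BBB
      exact (comb_BB hx hz).mpr (hv.trans _ _ _ ((comb_BB hx hy).mp hxy)
        ((comb_BB hy hz).mp hyz))

set_option maxHeartbeats 2000000 in
lemma comb_CD {n m : ℕ} (hn : 0 < n) (hm : 0 < m)
    {D1 : Set (Fin n → Fin n → Prop)} {D2 : Set (Fin m → Fin m → Prop)}
    (h1 : IsCondorcetDomain D1) (h2 : IsCondorcetDomain D2) :
    IsCondorcetDomain {w : Fin (n + m) → Fin (n + m) → Prop |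
      ∃ ε u v, u ∈ D1 ∧ v ∈ D2 ∧ w = comb n m ε u v (botOf hn u) (topOf hm v)} := by
  constructor
  · rintro w ⟨ε, u, v, hu, hv, rfl⟩
    exact comb_STO hn hm ε (h1.1 u hu) (h2.1 v hv)
  · intro k hk P hP
    choose ε u v hu hv hw using hP
    have hU : Transitive (Maj u) := h1.2 k hk u hu
    have hV : Transitive (Maj v) := h2.2 k hk v hv
    have hSTOu : ∀ i, IsStrictTotalOrder (Fin n) (u i) := fun i => h1.1 _ (hu i)
    have hSTOv : ∀ i, IsStrictTotalOrder (Fin m) (v i) := fun i => h2.1 _ (hv i)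
    have FAA : ∀ (i : Fin k) (x y : Fin (n + m)) (hx : (x : ℕ) < n) (hy : (y : ℕ) < n),
        P i x y ↔ u i ⟨x, hx⟩ ⟨y, hy⟩ := fun i x y hx hy => by
      rw [hw i]; exact comb_AA hx hy
    have FBB : ∀ (i : Fin k) (x y : Fin (n + m)) (hx : ¬ (x : ℕ) < n) (hy : ¬ (y : ℕ) < n),
        P i x y ↔ v i ⟨(x : ℕ) - n, by have := x.isLt; omega⟩
          ⟨(y : ℕ) - n, by have := y.isLt; omega⟩ := fun i x y hx hy => by
      rw [hw i]; exact comb_BB hx hy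
    have FBA : ∀ (i : Fin k) (x y : Fin (n + m)) (hx : ¬ (x : ℕ) < n) (hy : (y : ℕ) < n),
        P i x y ↔ (ε i = true ∧
          (⟨(x : ℕ) - n, by have := x.isLt; omega⟩ : Fin m) = topOf hm (v i) ∧
          (⟨(y : ℕ), hy⟩ : Fin n) = botOf hn (u i)) := fun i x y hx hy => by
      rw [hw i]; exact comb_BA hx hy
    have FAB : ∀ (i : Fin k) (x y : Fin (n + m)), (x : ℕ) < n → ¬ (y : ℕ) < n →
        (P i x y ↔ ¬ P i y x) := fun i x y hx hy => by
      rw [hw i]; exact (comb_AB hx hy).trans (not_congr (comb_BA hy hx).symm)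
    have hcross : ∀ (x y : Fin (n + m)), (x : ℕ) < n → ¬ (y : ℕ) < n →
        Nat.card {i : Fin k // P i x y} + Nat.card {i : Fin k // P i y x} = k :=
      fun x y hx hy => cnt_compl (fun i => FAB i x y hx hy)
    have hcomplu : ∀ (x y : Fin n), x ≠ y →
        Nat.card {i : Fin k // u i x y} + Nat.card {i : Fin k // u i y x} = k :=
      fun x y hxy => cnt_compl (fun i => STO_compl (hSTOu i) hxy)
    have hcomplv : ∀ (x y : Fin m), x ≠ y →
        Nat.card {i : Fin k // v i x y} + Nat.card {i : Fin k // v i y x} = k :=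
      fun x y hxy => cnt_compl (fun i => STO_compl (hSTOv i) hxy)
    have hMajAA : ∀ (x y : Fin (n + m)) (hx : (x : ℕ) < n) (hy : (y : ℕ) < n),
        Maj P x y ↔ Maj u ⟨x, hx⟩ ⟨y, hy⟩ := by
      intro x y hx hy
      have e1 : Nat.card {i : Fin k // P i x y} =
          Nat.card {i : Fin k // u i ⟨x, hx⟩ ⟨y, hy⟩} :=
        cnt_congr (fun i => FAA i x y hx hy)
      have e2 : Nat.card {i : Fin k // P i y x} =
          Nat.card {i : Fin k // u i ⟨y, hy⟩ ⟨x, hx⟩} :=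
        cnt_congr (fun i => FAA i y x hy hx)
      unfold Maj
      rw [e1, e2]
    have hMajBB : ∀ (x y : Fin (n + m)) (hx : ¬ (x : ℕ) < n) (hy : ¬ (y : ℕ) < n),
        Maj P x y ↔ Maj v ⟨(x : ℕ) - n, by have := x.isLt; omega⟩
          ⟨(y : ℕ) - n, by have := y.isLt; omega⟩ := by
      intro x y hx hy
      have e1 : Nat.card {i : Fin k // P i x y} =
          Nat.card {i : Fin k // v i ⟨(x : ℕ) - n, by have := x.isLt; omega⟩
            ⟨(y : ℕ) - n, by have := y.isLt; omega⟩} :=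
        cnt_congr (fun i => FBB i x y hx hy)
      have e2 : Nat.card {i : Fin k // P i y x} =
          Nat.card {i : Fin k // v i ⟨(y : ℕ) - n, by have := y.isLt; omega⟩
            ⟨(x : ℕ) - n, by have := x.isLt; omega⟩} :=
        cnt_congr (fun i => FBB i y x hy hx)
      unfold Maj
      rw [e1, e2]
    intro a b c hab hbc
    rcases eq_or_ne a c with rfl | hac
    · exact absurd hbc (lt_asymm hab)
    by_cases ha : (a : ℕ) < n <;> by_cases hb : (b : ℕ) < n <;> by_cases hc : (c : ℕ) < n
    · -- AAA
      rw [hMajAA a b ha hb] at hab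
      rw [hMajAA b c hb hc] at hbc
      exact (hMajAA a c ha hc).mpr (hU hab hbc)
    · -- AAB : goal Maj P a c with c in B
      rw [hMajAA a b ha hb] at hab
      have hab' : Nat.card {i : Fin k // u i ⟨a, ha⟩ ⟨b, hb⟩} >
          Nat.card {i : Fin k // u i ⟨b, hb⟩ ⟨a, ha⟩} := hab
      have hxy : (⟨(a : ℕ), ha⟩ : Fin n) ≠ ⟨(b : ℕ), hb⟩ := by
        intro h; rw [h] at hab'; exact lt_irrefl _ hab'
      have hsumu := hcomplu _ _ hxy
      have hsum := hcross a c ha hc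
      by_contra hgoal
      have hgoal' : ¬ (Nat.card {i : Fin k // P i a c} >
          Nat.card {i : Fin k // P i c a}) := hgoal
      have hmono : Nat.card {i : Fin k // P i c a} ≤
          Nat.card {i : Fin k // u i ⟨b, hb⟩ ⟨a, ha⟩} := by
        refine cnt_mono (fun i hi => ?_)
        obtain ⟨he, hT, hB⟩ := (FBA i c a hc ha).mp hi
        rw [hB]
        refine botOf_spec hn (u i) (hSTOu i) _ ?_
        rw [← hB]
        exact fun h => hxy (h.symm)
      omega
    · -- ABA : goal Maj P a c, b in B
      have hbc' : Nat.card {i : Fin k // P i b c} >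
          Nat.card {i : Fin k // P i c b} := hbc
      have hsum := hcross c b hc hb
      have hxz : (⟨(a : ℕ), ha⟩ : Fin n) ≠ ⟨(c : ℕ), hc⟩ := by
        intro h
        exact hac (Fin.ext (by simpa [Fin.mk.injEq] using h))
      have hmono : Nat.card {i : Fin k // P i b c} ≤
          Nat.card {i : Fin k // u i ⟨a, ha⟩ ⟨c, hc⟩} := by
        refine cnt_mono (fun i hi => ?_)
        obtain ⟨he, hT, hB⟩ := (FBA i b c hb hc).mp hi
        rw [hB]
        refine botOf_spec hn (u i) (hSTOu i) _ ?_
        rw [← hB]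
        exact hxz
      have hsumu := hcomplu _ _ hxz
      rw [hMajAA a c ha hc]
      show Nat.card {i : Fin k // u i ⟨a, ha⟩ ⟨c, hc⟩} >
          Nat.card {i : Fin k // u i ⟨c, hc⟩ ⟨a, ha⟩}
      omega
    · -- ABB : goal Maj P a c, a in A
      rw [hMajBB b c hb hc] at hbc
      have hbc' : Nat.card {i : Fin k // v i ⟨(b : ℕ) - n, by have := b.isLt; omega⟩
            ⟨(c : ℕ) - n, by have := c.isLt; omega⟩} >
          Nat.card {i : Fin k // v i ⟨(c : ℕ) - n, by have := c.isLt; omega⟩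
            ⟨(b : ℕ) - n, by have := b.isLt; omega⟩} := hbc
      have hpq : (⟨(b : ℕ) - n, by have := b.isLt; omega⟩ : Fin m) ≠
          ⟨(c : ℕ) - n, by have := c.isLt; omega⟩ := by
        intro h; rw [h] at hbc'; exact lt_irrefl _ hbc'
      have hsumv := hcomplv _ _ hpq
      have hsum := hcross a c ha hc
      by_contra hgoal
      have hgoal' : ¬ (Nat.card {i : Fin k // P i a c} >
          Nat.card {i : Fin k // P i c a}) := hgoal
      have hmono : Nat.card {i : Fin k // P i c a} ≤
          Nat.card {i : Fin k // v i ⟨(c : ℕ) - n, by have := c.isLt; omega⟩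
            ⟨(b : ℕ) - n, by have := b.isLt; omega⟩} := by
        refine cnt_mono (fun i hi => ?_)
        obtain ⟨he, hT, hB⟩ := (FBA i c a hc ha).mp hi
        have hq : (⟨(c : ℕ) - n, by have := c.isLt; omega⟩ : Fin m) = topOf hm (v i) := hT
        have hne : (⟨(b : ℕ) - n, by have := b.isLt; omega⟩ : Fin m) ≠ topOf hm (v i) := by
          rw [← hq]; exact hpq
        have h2 := topOf_spec hm (v i) (hSTOv i) _ hne
        rw [← hq] at h2
        exact h2
      omega
    · -- BAA : vacuous
      exfalso
      have hab' : Nat.card {i : Fin k // P i a b} >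
          Nat.card {i : Fin k // P i b a} := hab
      have hsum := hcross b a hb ha
      rw [hMajAA b c hb hc] at hbc
      have hbc' : Nat.card {i : Fin k // u i ⟨b, hb⟩ ⟨c, hc⟩} >
          Nat.card {i : Fin k // u i ⟨c, hc⟩ ⟨b, hb⟩} := hbc
      have hyz : (⟨(b : ℕ), hb⟩ : Fin n) ≠ ⟨(c : ℕ), hc⟩ := by
        intro h; rw [h] at hbc'; exact lt_irrefl _ hbc'
      have hsumu := hcomplu _ _ hyz
      have hmono : Nat.card {i : Fin k // P i a b} ≤
          Nat.card {i : Fin k // u i ⟨c, hc⟩ ⟨b, hb⟩} := by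
        refine cnt_mono (fun i hi => ?_)
        obtain ⟨he, hT, hB⟩ := (FBA i a b ha hb).mp hi
        rw [hB]
        refine botOf_spec hn (u i) (hSTOu i) _ ?_
        rw [← hB]
        exact fun h => hyz h.symm
      omega
    · -- BAB : direct
      have hab' : Nat.card {i : Fin k // P i a b} >
          Nat.card {i : Fin k // P i b a} := hab
      have hsum := hcross b a hb ha
      have hpq : (⟨(a : ℕ) - n, by have := a.isLt; omega⟩ : Fin m) ≠
          ⟨(c : ℕ) - n, by have := c.isLt; omega⟩ := by
        intro h
        have : (a : ℕ) - n = (c : ℕ) - n := by simpa [Fin.mk.injEq] using h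
        exact hac (Fin.ext (by omega))
      have hsumv := hcomplv _ _ hpq
      have hmono : Nat.card {i : Fin k // P i a b} ≤
          Nat.card {i : Fin k // v i ⟨(a : ℕ) - n, by have := a.isLt; omega⟩
            ⟨(c : ℕ) - n, by have := c.isLt; omega⟩} := by
        refine cnt_mono (fun i hi => ?_)
        obtain ⟨he, hT, hB⟩ := (FBA i a b ha hb).mp hi
        have hp : (⟨(a : ℕ) - n, by have := a.isLt; omega⟩ : Fin m) = topOf hm (v i) := hT
        have hne : (⟨(c : ℕ) - n, by have := c.isLt; omega⟩ : Fin m) ≠ topOf hm (v i) := by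
          rw [← hp]; exact fun h => hpq h.symm
        have h2 := topOf_spec hm (v i) (hSTOv i) _ hne
        rw [← hp] at h2
        exact h2
      rw [hMajBB a c ha hc]
      show Nat.card {i : Fin k // v i ⟨(a : ℕ) - n, by have := a.isLt; omega⟩
            ⟨(c : ℕ) - n, by have := c.isLt; omega⟩} >
          Nat.card {i : Fin k // v i ⟨(c : ℕ) - n, by have := c.isLt; omega⟩
            ⟨(a : ℕ) - n, by have := a.isLt; omega⟩}
      omega
    · -- BBA : vacuous
      exfalso
      rw [hMajBB a b ha hb] at hab
      have hab' : Nat.card {i : Fin k // v i ⟨(a : ℕ) - n, by have := a.isLt; omega⟩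
            ⟨(b : ℕ) - n, by have := b.isLt; omega⟩} >
          Nat.card {i : Fin k // v i ⟨(b : ℕ) - n, by have := b.isLt; omega⟩
            ⟨(a : ℕ) - n, by have := a.isLt; omega⟩} := hab
      have hpq : (⟨(a : ℕ) - n, by have := a.isLt; omega⟩ : Fin m) ≠
          ⟨(b : ℕ) - n, by have := b.isLt; omega⟩ := by
        intro h; rw [h] at hab'; exact lt_irrefl _ hab'
      have hsumv := hcomplv _ _ hpq
      have hbc' : Nat.card {i : Fin k // P i b c} >
          Nat.card {i : Fin k // P i c b} := hbc
      have hsum := hcross c b hc hb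
      have hmono : Nat.card {i : Fin k // P i b c} ≤
          Nat.card {i : Fin k // v i ⟨(b : ℕ) - n, by have := b.isLt; omega⟩
            ⟨(a : ℕ) - n, by have := a.isLt; omega⟩} := by
        refine cnt_mono (fun i hi => ?_)
        obtain ⟨he, hT, hB⟩ := (FBA i b c hb hc).mp hi
        have hq : (⟨(b : ℕ) - n, by have := b.isLt; omega⟩ : Fin m) = topOf hm (v i) := hT
        have hne : (⟨(a : ℕ) - n, by have := a.isLt; omega⟩ : Fin m) ≠ topOf hm (v i) := by
          rw [← hq]; exact hpq
        have h2 := topOf_spec hm (v i) (hSTOv i) _ hne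
        rw [← hq] at h2
        exact h2
      omega
    · -- BBB
      rw [hMajBB a b ha hb] at hab
      rw [hMajBB b c hb hc] at hbc
      exact (hMajBB a c ha hc).mpr (hV hab hbc)

lemma comb_uu {n m : ℕ} {ε u v b0 t} (p q : Fin n) (h1 : (p : ℕ) < n + m)
    (h2 : (q : ℕ) < n + m) :
    comb n m ε u v b0 t ⟨(p : ℕ), h1⟩ ⟨(q : ℕ), h2⟩ ↔ u p q :=
  comb_AA p.isLt q.isLt

lemma comb_vv {n m : ℕ} {ε u v b0 t} (p q : Fin m) (h1 : n + (p : ℕ) < n + m)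
    (h2 : n + (q : ℕ) < n + m) :
    comb n m ε u v b0 t ⟨n + (p : ℕ), h1⟩ ⟨n + (q : ℕ), h2⟩ ↔ v p q := by
  have hx : ¬ ((⟨n + (p : ℕ), h1⟩ : Fin (n + m)) : ℕ) < n := by
    show ¬ n + (p : ℕ) < n; omega
  have hy : ¬ ((⟨n + (q : ℕ), h2⟩ : Fin (n + m)) : ℕ) < n := by
    show ¬ n + (q : ℕ) < n; omega
  rw [comb_BB hx hy]
  constructor
  · intro hh
    convert hh using 2 <;> simp
  · intro hh
    convert hh using 2 <;> simp

lemma comb_eps {n m : ℕ} {ε u v} {b0 : Fin n} {t : Fin m} (h1 : n + (t : ℕ) < n + m)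
    (h2 : (b0 : ℕ) < n + m) :
    comb n m ε u v b0 t ⟨n + (t : ℕ), h1⟩ ⟨(b0 : ℕ), h2⟩ ↔ ε = true := by
  have hx : ¬ ((⟨n + (t : ℕ), h1⟩ : Fin (n + m)) : ℕ) < n := by
    show ¬ n + (t : ℕ) < n; omega
  have hy : ((⟨(b0 : ℕ), h2⟩ : Fin (n + m)) : ℕ) < n := b0.isLt
  rw [comb_BA hx hy]
  constructor
  · rintro ⟨he, -, -⟩; exact he
  · intro he
    refine ⟨he, Fin.ext (by show n + (t : ℕ) - n = (t : ℕ); omega), Fin.ext rfl⟩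

lemma comb_inj {n m : ℕ} (hn : 0 < n) (hm : 0 < m) {ε ε' : Bool}
    {u u' : Fin n → Fin n → Prop} {v v' : Fin m → Fin m → Prop}
    (h : comb n m ε u v (botOf hn u) (topOf hm v) =
         comb n m ε' u' v' (botOf hn u') (topOf hm v')) :
    ε = ε' ∧ u = u' ∧ v = v' := by
  have hu : u = u' := by
    funext p q
    have h1 : (p : ℕ) < n + m := by have := p.isLt; omega
    have h2 : (q : ℕ) < n + m := by have := q.isLt; omega
    have := congrFun (congrFun h ⟨(p : ℕ), h1⟩) ⟨(q : ℕ), h2⟩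
    exact propext ((comb_uu p q h1 h2).symm.trans ((iff_of_eq this).trans (comb_uu p q h1 h2)))
  have hv : v = v' := by
    funext p q
    have h1 : n + (p : ℕ) < n + m := by have := p.isLt; omega
    have h2 : n + (q : ℕ) < n + m := by have := q.isLt; omega
    have := congrFun (congrFun h ⟨n + (p : ℕ), h1⟩) ⟨n + (q : ℕ), h2⟩
    exact propext ((comb_vv p q h1 h2).symm.trans ((iff_of_eq this).trans (comb_vv p q h1 h2)))
  subst hu
  subst hv
  refine ⟨?_, rfl, rfl⟩
  have h1 : n + ((topOf hm v : Fin m) : ℕ) < n + m := by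
    have := (topOf hm v).isLt; omega
  have h2 : ((botOf hn u : Fin n) : ℕ) < n + m := by
    have := (botOf hn u).isLt; omega
  have := congrFun (congrFun h ⟨n + ((topOf hm v : Fin m) : ℕ), h1⟩)
    ⟨((botOf hn u : Fin n) : ℕ), h2⟩
  have he : (ε = true) ↔ (ε' = true) :=
    (comb_eps h1 h2).symm.trans ((iff_of_eq this).trans (comb_eps h1 h2))
  cases ε <;> cases ε' <;> simp_all

lemma maxCD_bdd (N : ℕ) : BddAbove {s : ℕ | ∃ D : Set (Fin N → Fin N → Prop),
    IsCondorcetDomain D ∧ s = Nat.card D} := by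
  refine ⟨Nat.card (Fin N → Fin N → Prop), ?_⟩
  rintro s ⟨D, hD, rfl⟩
  exact Nat.card_le_card_of_injective (Subtype.val : D → _) Subtype.val_injective

lemma maxCD_attained (N : ℕ) : ∃ D : Set (Fin N → Fin N → Prop),
    IsCondorcetDomain D ∧ maxCD N = Nat.card D := by
  have hne : {s : ℕ | ∃ D : Set (Fin N → Fin N → Prop),
      IsCondorcetDomain D ∧ s = Nat.card D}.Nonempty := by
    refine ⟨0, ∅, ⟨fun r hr => absurd hr (Set.notMem_empty r), ?_⟩, by simp⟩
    intro k hk P hP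
    exact absurd (hP ⟨0, hk.pos⟩) (Set.notMem_empty _)
  obtain ⟨D, hD, hcard⟩ := Nat.sSup_mem hne (maxCD_bdd N)
  exact ⟨D, hD, hcard⟩


/-- For all positive integers `n` and `m`, `f(n+m) ≥ 2·f(n)·f(m)`. -/
theorem maxCD_superadditive (n m : ℕ) (hn : 1 ≤ n) (hm : 1 ≤ m) :
    2 * maxCD n * maxCD m ≤ maxCD (n + m) := by
  obtain ⟨D1, hD1, hc1⟩ := maxCD_attained n
  obtain ⟨D2, hD2, hc2⟩ := maxCD_attained m
  set D : Set (Fin (n + m) → Fin (n + m) → Prop) :=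
    {w | ∃ ε u v, u ∈ D1 ∧ v ∈ D2 ∧ w = comb n m ε u v (botOf hn u) (topOf hm v)} with hDdef
  have hCD : IsCondorcetDomain D := comb_CD hn hm hD1 hD2
  have hmemD : ∀ z : Bool × D1 × D2,
      comb n m z.1 z.2.1.1 z.2.2.1 (botOf hn z.2.1.1) (topOf hm z.2.2.1) ∈ D :=
    fun z => ⟨z.1, z.2.1.1, z.2.2.1, z.2.1.2, z.2.2.2, rfl⟩
  have hinj : Function.Injective (fun z : Bool × D1 × D2 =>
      (⟨comb n m z.1 z.2.1.1 z.2.2.1 (botOf hn z.2.1.1) (topOf hm z.2.2.1),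
        hmemD z⟩ : D)) := by
    rintro ⟨e1, ⟨u1, hu1⟩, ⟨v1, hv1⟩⟩ ⟨e2, ⟨u2, hu2⟩, ⟨v2, hv2⟩⟩ hz
    have hval : comb n m e1 u1 v1 (botOf hn u1) (topOf hm v1) =
        comb n m e2 u2 v2 (botOf hn u2) (topOf hm v2) := congrArg Subtype.val hz
    obtain ⟨he, hu, hv⟩ := comb_inj hn hm hval
    subst he; subst hu; subst hv
    rfl
  have hle : Nat.card (Bool × D1 × D2) ≤ Nat.card D :=
    Nat.card_le_card_of_injective _ hinj
  have hcardeq : Nat.card (Bool × D1 × D2) = 2 * Nat.card D1 * Nat.card D2 := by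
    rw [Nat.card_prod, Nat.card_prod]
    have : Nat.card Bool = 2 := by simp [Nat.card_eq_fintype_card]
    rw [this]; ring
  have hmem : Nat.card D ∈ {s : ℕ | ∃ D' : Set (Fin (n + m) → Fin (n + m) → Prop),
      IsCondorcetDomain D' ∧ s = Nat.card D'} := ⟨D, hCD, rfl⟩
  calc 2 * maxCD n * maxCD m = Nat.card (Bool × D1 × D2) := by
        rw [hc1, hc2, hcardeq]
    _ ≤ Nat.card D := hle
    _ ≤ maxCD (n + m) := le_csSup (maxCD_bdd (n + m)) hmem
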